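/- Let Z, h_max ∈ ℝ with h_max < Z, let φ ∈ (0, π), and let h : ℝ → ℝ be differentiable with h(x) ≤ h_max for all x, and suppose there exists κ < sin φ with |h'(x) cos φ| ≤ κ for all x ∈ ℝ. Then for every X ∈ ℝ there exists a unique s ≥ 0 such that Z − s sin φ = h(X − s cos φ); moreover s > 0. -/

import Mathlib

/-- existence, uniqueness and positivity of the travel distance `s`
along the observation ray from the sensor `(X, Z)` in direction `(cos φ, sin φ)`
to the cloud boundary `(x, h x)`. -/
theorem cloud_ray_intersection_exists_unique
    (Z hmax : ℝ) (hZ : hmax < Z) (φ : ℝ) (hφ : φ ∈ Set.Ioo 0 Real.pi)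
    (h : ℝ → ℝ) (hdiff : Differentiable ℝ h)
    (hbound : ∀ x : ℝ, h x ≤ hmax)
    (κ : ℝ) (hκ : κ < Real.sin φ)
    (hslope : ∀ x : ℝ, |deriv h x * Real.cos φ| ≤ κ) :
    ∀ X : ℝ,
      (∃! s : ℝ, 0 ≤ s ∧ Z - s * Real.sin φ = h (X - s * Real.cos φ)) ∧
      (∀ s : ℝ, 0 ≤ s → Z - s * Real.sin φ = h (X - s * Real.cos φ) → 0 < s) := by
  intro X
  set F : ℝ → ℝ := fun s => Z - s * Real.sin φ - h (X - s * Real.cos φ) with hF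
  have hd : ∀ s : ℝ, HasDerivAt F
      (-Real.sin φ + deriv h (X - s * Real.cos φ) * Real.cos φ) s := by
    intro s
    have h1 : HasDerivAt (fun s : ℝ => X - s * Real.cos φ) (-Real.cos φ) s := by
      simpa using ((hasDerivAt_id s).mul_const (Real.cos φ)).const_sub X
    have h2 := ((hdiff (X - s * Real.cos φ)).hasDerivAt.comp s h1)
    have h3 : HasDerivAt (fun s : ℝ => Z - s * Real.sin φ) (-Real.sin φ) s := by
      simpa using ((hasDerivAt_id s).mul_const (Real.sin φ)).const_sub Z
    have := h3.sub h2
    exact this.congr_deriv (by ring)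
  have hderivF : ∀ s : ℝ, deriv F s =
      -Real.sin φ + deriv h (X - s * Real.cos φ) * Real.cos φ := fun s => (hd s).deriv
  have hFd : Differentiable ℝ F := fun s => (hd s).differentiableAt
  have hderivneg : ∀ s : ℝ, deriv F s ≤ -(Real.sin φ - κ) := by
    intro s
    rw [hderivF]
    have := (abs_le.mp (hslope (X - s * Real.cos φ))).2
    linarith
  have hsκ : 0 < Real.sin φ - κ := by linarith
  have hstrict : StrictAnti F :=
    strictAnti_of_deriv_neg (fun s => lt_of_le_of_lt (hderivneg s) (by linarith))
  have hF0 : 0 < F 0 := by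
    have := hbound X
    simp only [hF]
    norm_num
    linarith
  -- G s = F s + (sin φ - κ) * s is antitone
  have hG : ∀ s : ℝ, 0 ≤ s → F s ≤ F 0 - (Real.sin φ - κ) * s := by
    intro s hs
    have hGd : ∀ t : ℝ, HasDerivAt (fun t => F t + (Real.sin φ - κ) * t)
        (deriv F t + (Real.sin φ - κ)) t := by
      intro t
      exact ((hd t).congr_deriv (hderivF t).symm).add
        (by simpa using (hasDerivAt_id t).const_mul (Real.sin φ - κ))
    have hanti : Antitone (fun t => F t + (Real.sin φ - κ) * t) := by
      apply antitone_of_deriv_nonpos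
      · exact fun t => ((hGd t).differentiableAt)
      · intro t
        rw [(hGd t).deriv]
        have := hderivneg t
        linarith
    have := hanti hs
    simp only at this
    linarith
  set S : ℝ := F 0 / (Real.sin φ - κ) with hS
  have hSpos : 0 < S := div_pos hF0 hsκ
  have hFS : F S ≤ 0 := by
    have := hG S hSpos.le
    have : F S ≤ F 0 - (Real.sin φ - κ) * S := this
    have hmul : (Real.sin φ - κ) * S = F 0 := by
      rw [hS]; field_simp
    linarith
  have hiv : (0:ℝ) ∈ F '' Set.Icc 0 S := by
    apply intermediate_value_Icc' hSpos.le hFd.continuous.continuousOn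
    exact ⟨hFS, hF0.le⟩
  obtain ⟨s₀, hs₀mem, hs₀⟩ := hiv
  have key : ∀ s : ℝ, (Z - s * Real.sin φ = h (X - s * Real.cos φ)) ↔ F s = 0 := by
    intro s; simp only [hF]; constructor <;> intro hh <;> linarith
  refine ⟨⟨s₀, ⟨hs₀mem.1, (key s₀).mpr hs₀⟩, ?_⟩, ?_⟩
  · rintro t ⟨ht0, hteq⟩
    exact hstrict.injective (((key t).mp hteq).trans hs₀.symm)
  · intro s hs hseq
    rcases hs.lt_or_eq with h' | h'
    · exact h'
    · exfalso
      have : F s = 0 := (key s).mp hseq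
      rw [← h'] at this
      linarith
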